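/- Let 2 < τ < 3 and define Φ₂(t₁,t₂) = t₁ t₂^{τ-1} ((τ-1)/((3-τ)(τ-2)) − t₁^{τ-2}/(τ-2) − ((τ-1)/(3-τ)) t₂^{3-τ}) for t₁, t₂ ∈ [0,1]. Then Φ₂(0,0) = 0, Φ₂(1,1) = 1, and Φ₂ is nondecreasing in each of t₁ and t₂ on [0,1]². -/

import Mathlib

theorem Phi_two_properties (τ : ℝ) (hτ1 : 2 < τ) (hτ2 : τ < 3)
    (Φ : ℝ → ℝ → ℝ)
    (hΦ : ∀ t₁ t₂, Φ t₁ t₂ = t₁ * t₂ ^ (τ - 1) *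
      ((τ - 1) / ((3 - τ) * (τ - 2)) - t₁ ^ (τ - 2) / (τ - 2) - (τ - 1) / (3 - τ) * t₂ ^ (3 - τ))) :
    Φ 0 0 = 0 ∧ Φ 1 1 = 1 ∧
      (∀ t₂ ∈ Set.Icc (0:ℝ) 1, MonotoneOn (fun t₁ => Φ t₁ t₂) (Set.Icc 0 1)) ∧
      (∀ t₁ ∈ Set.Icc (0:ℝ) 1, MonotoneOn (fun t₂ => Φ t₁ t₂) (Set.Icc 0 1)) := by
  have h2 : (0:ℝ) < τ - 2 := by linarith
  have h3 : (0:ℝ) < 3 - τ := by linarith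
  have h1 : (1:ℝ) ≤ τ - 1 := by linarith
  have hA : (τ - 1) / ((3 - τ) * (τ - 2)) = (τ - 1) / (3 - τ) + (τ - 1) / (τ - 2) := by
    field_simp
    ring
  refine ⟨?_, ?_, ?_, ?_⟩
  · rw [hΦ]; ring
  · rw [hΦ, Real.one_rpow, Real.one_rpow, Real.one_rpow]
    field_simp
    ring
  · -- monotone in t₁
    intro t₂ ht₂
    set A := (τ - 1) / ((3 - τ) * (τ - 2)) with hAdef
    set B := (τ - 1) / (3 - τ) with hBdef
    have hB0 : 0 ≤ B := div_nonneg (by linarith) h3.le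
    set c := t₂ ^ (τ - 1) * (A - B * t₂ ^ (3 - τ)) with hc
    set k := t₂ ^ (τ - 1) / (τ - 2) with hk
    have key : ∀ x ∈ Set.Icc (0:ℝ) 1, Φ x t₂ = c * x - k * x ^ (τ - 1) := by
      intro x hx
      have hx1 : x ^ (τ - 1) = x * x ^ (τ - 2) := by
        rw [show τ - 1 = 1 + (τ - 2) by ring, Real.rpow_add' hx.1 (by intro h; nlinarith),
          Real.rpow_one]
      rw [hΦ, hx1, hc, hk]
      ring
    have hderiv : ∀ x : ℝ, HasDerivAt (fun x => c * x - k * x ^ (τ - 1))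
        (c - k * ((τ - 1) * x ^ (τ - 2))) x := by
      intro x
      have h1' : HasDerivAt (fun x : ℝ => x ^ (τ - 1)) ((τ - 1) * x ^ (τ - 2)) x := by
        have := Real.hasDerivAt_rpow_const (x := x) (p := τ - 1) (Or.inr h1)
        simpa [show τ - 1 - 1 = τ - 2 by ring] using this
      exact (by simpa using (hasDerivAt_id x).const_mul c : HasDerivAt (fun x : ℝ => c * x) c x).sub (h1'.const_mul k)
    have hmono : MonotoneOn (fun x => c * x - k * x ^ (τ - 1)) (Set.Icc 0 1) := by
      apply monotoneOn_of_deriv_nonneg (convex_Icc 0 1)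
      · intro x _
        exact (hderiv x).continuousAt.continuousWithinAt
      · intro x _
        exact (hderiv x).differentiableAt.differentiableWithinAt
      · intro x hx
        rw [interior_Icc] at hx
        rw [(hderiv x).deriv]
        have hxm : x ^ (τ - 2) ≤ 1 := Real.rpow_le_one hx.1.le hx.2.le h2.le
        have hxm0 : 0 ≤ x ^ (τ - 2) := Real.rpow_nonneg hx.1.le _
        have ht2m : t₂ ^ (3 - τ) ≤ 1 := Real.rpow_le_one ht₂.1 ht₂.2 h3.le
        have ht2m0 : 0 ≤ t₂ ^ (3 - τ) := Real.rpow_nonneg ht₂.1 _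
        have ht20 : 0 ≤ t₂ ^ (τ - 1) := Real.rpow_nonneg ht₂.1 _
        rw [hc, hk]
        have hr : 0 ≤ (τ - 1) / (τ - 2) := div_nonneg (by linarith) h2.le
        have expand : t₂ ^ (τ - 1) * (A - B * t₂ ^ (3 - τ)) -
            t₂ ^ (τ - 1) / (τ - 2) * ((τ - 1) * x ^ (τ - 2)) =
            t₂ ^ (τ - 1) * (A - B * t₂ ^ (3 - τ) - (τ - 1) / (τ - 2) * x ^ (τ - 2)) := by
          ring
        rw [expand]
        apply mul_nonneg ht20
        have h4 : B * t₂ ^ (3 - τ) ≤ B := by nlinarith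
        have h5 : (τ - 1) / (τ - 2) * x ^ (τ - 2) ≤ (τ - 1) / (τ - 2) := by nlinarith
        rw [hA]
        linarith
    intro a ha b hb hab
    simp only
    rw [key a ha, key b hb]
    exact hmono ha hb hab
  · -- monotone in t₂
    intro t₁ ht₁
    set A := (τ - 1) / ((3 - τ) * (τ - 2)) with hAdef
    set B := (τ - 1) / (3 - τ) with hBdef
    have hB0 : 0 ≤ B := div_nonneg (by linarith) h3.le
    set e := t₁ * (A - t₁ ^ (τ - 2) / (τ - 2)) with he
    set f := t₁ * B with hf
    have key : ∀ y ∈ Set.Icc (0:ℝ) 1, Φ t₁ y = e * y ^ (τ - 1) - f * y ^ 2 := by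
      intro y hy
      have hy1 : y ^ (τ - 1) * y ^ (3 - τ) = y ^ 2 := by
        rw [← Real.rpow_add' hy.1 (by norm_num : (τ - 1) + (3 - τ) ≠ 0),
          show (τ - 1) + (3 - τ) = (2:ℝ) by ring, Real.rpow_two]
      rw [hΦ, he, hf]
      rw [show t₁ * y ^ (τ - 1) * (A - t₁ ^ (τ - 2) / (τ - 2) - B * y ^ (3 - τ)) =
        t₁ * (A - t₁ ^ (τ - 2) / (τ - 2)) * y ^ (τ - 1)
          - t₁ * B * (y ^ (τ - 1) * y ^ (3 - τ)) by ring, hy1]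
    have hderiv : ∀ y : ℝ, HasDerivAt (fun y => e * y ^ (τ - 1) - f * y ^ 2)
        (e * ((τ - 1) * y ^ (τ - 2)) - f * (2 * y)) y := by
      intro y
      have h1' : HasDerivAt (fun y : ℝ => y ^ (τ - 1)) ((τ - 1) * y ^ (τ - 2)) y := by
        have := Real.hasDerivAt_rpow_const (x := y) (p := τ - 1) (Or.inr h1)
        simpa [show τ - 1 - 1 = τ - 2 by ring] using this
      have h2' : HasDerivAt (fun y : ℝ => y ^ 2) (2 * y) y := by
        simpa using hasDerivAt_pow 2 y
      exact (h1'.const_mul e).sub (h2'.const_mul f)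
    have hmono : MonotoneOn (fun y => e * y ^ (τ - 1) - f * y ^ 2) (Set.Icc 0 1) := by
      apply monotoneOn_of_deriv_nonneg (convex_Icc 0 1)
      · intro y _
        exact (hderiv y).continuousAt.continuousWithinAt
      · intro y _
        exact (hderiv y).differentiableAt.differentiableWithinAt
      · intro y hy
        rw [interior_Icc] at hy
        rw [(hderiv y).deriv]
        have hym : y ≤ y ^ (τ - 2) := by
          have := Real.rpow_le_rpow_of_exponent_ge hy.1 hy.2.le (show τ - 2 ≤ 1 by linarith)
          simpa using this
        have hym0 : 0 ≤ y ^ (τ - 2) := Real.rpow_nonneg hy.1.le _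
        have ht1m : t₁ ^ (τ - 2) ≤ 1 := Real.rpow_le_one ht₁.1 ht₁.2 h2.le
        have ht1d : t₁ ^ (τ - 2) / (τ - 2) ≤ 1 / (τ - 2) := by gcongr
        have hA2 : A - 1 / (τ - 2) = 2 / (3 - τ) := by
          rw [hAdef]; field_simp; ring
        have hE : 2 / (3 - τ) ≤ A - t₁ ^ (τ - 2) / (τ - 2) := by linarith
        have hE2 : 2 * B ≤ (τ - 1) * (A - t₁ ^ (τ - 2) / (τ - 2)) := by
          have h6 := mul_le_mul_of_nonneg_left hE (show (0:ℝ) ≤ τ - 1 by linarith)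
          have h7 : (τ - 1) * (2 / (3 - τ)) = 2 * B := by rw [hBdef]; ring
          linarith
        have hstep : 2 * B * y ≤ (τ - 1) * (A - t₁ ^ (τ - 2) / (τ - 2)) * y ^ (τ - 2) := by
          have h8 := mul_le_mul_of_nonneg_right hE2 hym0
          have h9 := mul_le_mul_of_nonneg_left hym (show (0:ℝ) ≤ 2 * B by linarith)
          nlinarith
        have hrw : e * ((τ - 1) * y ^ (τ - 2)) - f * (2 * y) =
            t₁ * ((τ - 1) * (A - t₁ ^ (τ - 2) / (τ - 2)) * y ^ (τ - 2) - 2 * B * y) := by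
          rw [he, hf]; ring
        rw [hrw]
        exact mul_nonneg ht₁.1 (by linarith)
    intro a ha b hb hab
    simp only
    rw [key a ha, key b hb]
    exact hmono ha hb hab
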